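/- Let 𝔸 be a complete normed real algebra (a Banach algebra), let a, b ∈ 𝔸, and let α ∈ ℝ satisfy the commutation relation a * b - b * a = α • a. Then for every τ ∈ ℝ, exp(τ • b) * a * exp(-τ • b) = Real.exp (-τ * α) • a. -/

import Mathlib

open NormedSpace

lemma exp_intertwine {𝔸 : Type*} [NormedRing 𝔸] [NormedAlgebra ℝ 𝔸]
    [CompleteSpace 𝔸] (a x y : 𝔸) (h : a * x = y * a) :
    a * NormedSpace.exp x = NormedSpace.exp y * a := by
  have hpow : ∀ n : ℕ, a * x ^ n = y ^ n * a := by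
    intro n
    induction n with
    | zero => simp
    | succ n ih => rw [pow_succ, ← mul_assoc, ih, mul_assoc, h, ← mul_assoc, ← pow_succ]
  rw [exp_eq_tsum ℝ]
  rw [← (NormedSpace.expSeries_summable' (𝕂 := ℝ) x).tsum_mul_left a,
    ← (NormedSpace.expSeries_summable' (𝕂 := ℝ) y).tsum_mul_right a]
  congr 1
  ext n
  rw [mul_smul_comm, hpow, smul_mul_assoc]

/-- If `[a,b] = α • a` in a Banach algebra, then `e^{τb} a e^{-τb} = e^{-τα} • a`. -/
theorem exp_conj_of_commutator {𝔸 : Type*} [NormedRing 𝔸] [NormedAlgebra ℝ 𝔸]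
    [CompleteSpace 𝔸] (a b : 𝔸) (α : ℝ) (h : a * b - b * a = α • a) (τ : ℝ) :
    NormedSpace.exp (τ • b) * a * NormedSpace.exp ((-τ) • b) =
      Real.exp (-τ * α) • a := by
  have hab : a * b = b * a + α • a := by rw [← h]; abel
  have key : a * ((-τ) • b) = ((-τ) • b + (-τ * α) • (1 : 𝔸)) * a := by
    rw [mul_smul_comm, hab, add_mul, smul_mul_assoc, smul_mul_assoc, one_mul]
    module
  have h1 := exp_intertwine a ((-τ) • b) ((-τ) • b + (-τ * α) • (1 : 𝔸)) key
  have hcomm : Commute ((-τ) • b) ((-τ * α) • (1 : 𝔸)) :=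
    (Commute.one_right ((-τ) • b)).smul_right (-τ * α)
  have h2 : NormedSpace.exp ((-τ) • b + (-τ * α) • (1 : 𝔸)) =
      Real.exp (-τ * α) • NormedSpace.exp ((-τ) • b) := by
    rw [NormedSpace.exp_add_of_commute_of_mem_ball (𝕂 := ℝ) hcomm ((expSeries_radius_eq_top ℝ 𝔸).symm ▸ edist_lt_top _ _) ((expSeries_radius_eq_top ℝ 𝔸).symm ▸ edist_lt_top _ _)]
    have : ((-τ * α) • (1 : 𝔸)) = algebraMap ℝ 𝔸 (-τ * α) := by
      rw [Algebra.algebraMap_eq_smul_one]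
    rw [this, ← NormedSpace.algebraMap_exp_comm, ← Real.exp_eq_exp_ℝ,
      Algebra.algebraMap_eq_smul_one, mul_smul_comm, mul_one]
  have h3 : NormedSpace.exp (τ • b) * NormedSpace.exp ((-τ) • b) = 1 := by
    rw [← NormedSpace.exp_add_of_commute_of_mem_ball (𝕂 := ℝ) (((Commute.refl b).smul_left τ).smul_right (-τ)) ((expSeries_radius_eq_top ℝ 𝔸).symm ▸ edist_lt_top _ _) ((expSeries_radius_eq_top ℝ 𝔸).symm ▸ edist_lt_top _ _)]
    simp [← add_smul]
  calc NormedSpace.exp (τ • b) * a * NormedSpace.exp ((-τ) • b)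
      = NormedSpace.exp (τ • b) * (a * NormedSpace.exp ((-τ) • b)) := by
        rw [mul_assoc]
    _ = NormedSpace.exp (τ • b) * (Real.exp (-τ * α) •
          NormedSpace.exp ((-τ) • b) * a) := by rw [h1, h2]
    _ = Real.exp (-τ * α) • (NormedSpace.exp (τ • b) *
          NormedSpace.exp ((-τ) • b) * a) := by
        rw [smul_mul_assoc, mul_smul_comm, mul_assoc]
    _ = Real.exp (-τ * α) • a := by rw [h3, one_mul]
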